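/- arXiv:1404.3143 — 3 statements merged into one kernel-verified Lean document; each statement's English description precedes it below -/
import Mathlib

section
/- Let E be an exceptional object in a k-linear triangulated category T with finite-dimensional Hom spaces. Then the smallest triangulated subcategory of T generated by E is admissible: for any X ∈ T, the object obtained as the cone of the canonical evaluation map ⊕_t Hom(E, X[t]) ⊗ E[-t] → X lies in the right orthogonal E^⊥. -/
open CategoryTheory Category Limits Pretriangulated

universe v u

variable {C : Type u} [Category.{v} C] [Preadditive C] [HasZeroObject C]
  [HasShift C ℤ] [∀ n : ℤ, (CategoryTheory.shiftFunctor C n).Additive] [Pretriangulated C]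

/-- left orthogonal of a set of objects -/
def leftOrthogonal (S : Set C) : Set C :=
  {X | ∀ A ∈ S, ∀ t : ℤ, ∀ f : X ⟶ A⟦t⟧, f = 0}

/-- right orthogonal of a set of objects -/
def rightOrthogonal (S : Set C) : Set C :=
  {X | ∀ A ∈ S, ∀ t : ℤ, ∀ f : A⟦t⟧ ⟶ X, f = 0}

/-- objects of the smallest triangulated subcategory containing `S` -/
inductive isGen (S : Set C) : C → Prop
  | of {X : C} (hX : X ∈ S) : isGen S X
  | zero {X : C} (hX : Limits.IsZero X) : isGen S X
  | iso {X Y : C} (e : X ≅ Y) (hX : isGen S X) : isGen S Y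
  | shift {X : C} (n : ℤ) (hX : isGen S X) : isGen S (X⟦n⟧)
  | ext (T : Triangle C) (hT : T ∈ distTriang C) (h₁ : isGen S T.obj₁)
      (h₃ : isGen S T.obj₃) : isGen S T.obj₂

/-- a full triangulated subcategory given by a set of objects -/
structure IsTriangulatedSub (A : Set C) : Prop where
  zero : ∀ X : C, Limits.IsZero X → X ∈ A
  iso : ∀ {X Y : C}, (X ≅ Y) → X ∈ A → Y ∈ A
  shift : ∀ X ∈ A, ∀ n : ℤ, X⟦n⟧ ∈ A
  ext : ∀ T : Triangle C, (T ∈ distTriang C) → T.obj₁ ∈ A → T.obj₃ ∈ A → T.obj₂ ∈ A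

/-- admissibility: the inclusion functor has both adjoints -/
def isAdmissible (A : Set C) : Prop :=
  (ObjectProperty.ι (C := C) (· ∈ A)).IsLeftAdjoint ∧
  (ObjectProperty.ι (C := C) (· ∈ A)).IsRightAdjoint

variable (k : Type*) [Field k] [Linear k C]

open ZeroObject in
set_option linter.unusedSectionVars false in
/-- Auxiliary: transport of nonvanishing along shifts. -/
lemma aux_shift_nonzero (E X : C) {s : ℤ} (f : (E⟦s⟧ : C) ⟶ X) (h : f ≠ 0) :
    ∃ g : E ⟶ (X⟦-s⟧ : C), g ≠ 0 := by
  refine ⟨((shiftFunctorCompIsoId C s (-s) (by omega)).app E).inv ≫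
      (shiftFunctor C (-s)).map f, ?_⟩
  intro h0
  apply h
  apply (shiftFunctor C (-s)).map_injective
  rw [Functor.map_zero]
  have := congrArg (fun q => ((shiftFunctorCompIsoId C s (-s) (by omega)).app E).hom ≫ q) h0
  simpa using this

set_option linter.unusedSectionVars false in
/-- Auxiliary: maps between distinct shifts of an exceptional object vanish. -/
lemma aux_shift_orth (E : C) (hexc₁ : ∀ t : ℤ, t ≠ 0 → ∀ f : E ⟶ E⟦t⟧, f = 0)
    {s t : ℤ} (hst : s ≠ t) (f : (E⟦s⟧ : C) ⟶ E⟦t⟧) : f = 0 := by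
  apply (shiftFunctor C (-s)).map_injective
  rw [Functor.map_zero]
  have h0 : ((shiftFunctorCompIsoId C s (-s) (by omega)).app E).inv ≫
      (shiftFunctor C (-s)).map f ≫
      ((shiftFunctorAdd' C t (-s) (t - s) (by omega)).app E).inv = 0 :=
    hexc₁ (t - s) (by omega) _
  have : (shiftFunctor C (-s)).map f =
      ((shiftFunctorCompIsoId C s (-s) (by omega)).app E).hom ≫
      (((shiftFunctorCompIsoId C s (-s) (by omega)).app E).inv ≫
        (shiftFunctor C (-s)).map f ≫
        ((shiftFunctorAdd' C t (-s) (t - s) (by omega)).app E).inv) ≫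
      ((shiftFunctorAdd' C t (-s) (t - s) (by omega)).app E).hom := by simp
  rw [this, h0]
  simp

set_option linter.unusedSectionVars false in
/-- Auxiliary: nonzero endomorphisms of shifts of an exceptional object are invertible. -/
lemma aux_shift_inv (E : C) (hexc₀ : ∀ f : E ⟶ E, ∃ c : k, f = c • 𝟙 E)
    {s : ℤ} (f : (E⟦s⟧ : C) ⟶ E⟦s⟧) (hf : f ≠ 0) :
    ∃ u : (E⟦s⟧ : C) ⟶ E⟦s⟧, u ≫ f = 𝟙 _ := by
  set F := shiftFunctor C (-s) with hF
  set ρ := (shiftFunctorCompIsoId C s (-s) (by omega)).app E with hρ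
  have hmf : F.map f = ρ.hom ≫ (ρ.inv ≫ F.map f ≫ ρ.hom) ≫ ρ.inv := by simp
  obtain ⟨c, hc⟩ := hexc₀ (ρ.inv ≫ F.map f ≫ ρ.hom)
  have hc0 : c ≠ 0 := by
    rintro rfl
    apply hf
    apply F.map_injective
    rw [Functor.map_zero, hmf, hc]
    simp
  obtain ⟨u, hu⟩ := F.map_surjective (ρ.hom ≫ (c⁻¹ • 𝟙 E) ≫ ρ.inv)
  refine ⟨u, F.map_injective ?_⟩
  rw [Functor.map_comp, hu, hmf, hc, CategoryTheory.Functor.map_id]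
  simp [Linear.smul_comp, Linear.comp_smul, smul_smul, inv_mul_cancel₀ hc0,
    mul_inv_cancel₀ hc0]
  rfl

open ZeroObject in
set_option linter.unusedSectionVars false in
/-- Auxiliary: existence of finite direct sums with explicit (co)projections, which
remain in the generated subcategory. -/
lemma aux_biprod (S : Set C) {J : Type} [DecidableEq J] (P : J → C) (T : Finset J) :
    ∃ (A : C) (inc : ∀ j, P j ⟶ A) (pr : ∀ j, A ⟶ P j),
      (∀ j ∈ T, inc j ≫ pr j = 𝟙 (P j)) ∧
      (∀ i ∈ T, ∀ j ∈ T, i ≠ j → inc i ≫ pr j = 0) ∧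
      (∑ j ∈ T, pr j ≫ inc j = 𝟙 A) ∧
      ((∀ j ∈ T, isGen S (P j)) → isGen S A) := by
  induction T using Finset.induction with
  | empty =>
      exact ⟨0, fun j => 0, fun j => 0, by simp, by simp,
        by simpa using ((isZero_zero C).eq_of_src _ _), fun _ => isGen.zero (isZero_zero C)⟩
  | @insert a T' ha ih =>
      obtain ⟨A', inc', pr', h1, h2, h3, h4⟩ := ih
      refine ⟨P a ⊞ A',
        fun j => if h : j = a then eqToHom (by rw [h]) ≫ biprod.inl else inc' j ≫ biprod.inr,
        fun j => if h : j = a then biprod.fst ≫ eqToHom (by rw [h]) else biprod.snd ≫ pr' j,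
        ?_, ?_, ?_, ?_⟩
      · intro j hj
        dsimp only
        by_cases h : j = a
        · rw [dif_pos h, dif_pos h]
          simp
        · have hj' : j ∈ T' := (Finset.mem_insert.1 hj).resolve_left h
          rw [dif_neg h, dif_neg h, assoc, biprod.inr_snd_assoc, h1 j hj']
      · intro i hi j hj hij
        dsimp only
        by_cases h : i = a
        · have hj0 : ¬ (j = a) := fun hh => hij (h.trans hh.symm)
          rw [dif_pos h, dif_neg hj0]
          simp
        · rw [dif_neg h]
          by_cases h' : j = a
          · rw [dif_pos h']
            simp
          · have hi' : i ∈ T' := (Finset.mem_insert.1 hi).resolve_left h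
            have hj' : j ∈ T' := (Finset.mem_insert.1 hj).resolve_left h'
            rw [dif_neg h', assoc, biprod.inr_snd_assoc, h2 i hi' j hj' hij]
      · dsimp only
        rw [Finset.sum_insert ha, dif_pos rfl, dif_pos rfl]
        rw [Finset.sum_congr rfl (fun j hj => by
          rw [dif_neg (fun hh : j = a => ha (hh ▸ hj)), dif_neg (fun hh : j = a => ha (hh ▸ hj))])]
        have : ∑ j ∈ T', ((biprod.snd : P a ⊞ A' ⟶ A') ≫ pr' j) ≫
              (inc' j ≫ (biprod.inr : A' ⟶ P a ⊞ A'))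
            = biprod.snd ≫ (∑ j ∈ T', pr' j ≫ inc' j) ≫ biprod.inr := by
          rw [Preadditive.sum_comp, Preadditive.comp_sum]
          simp [assoc]
        rw [this, h3]
        simp [biprod.total]
      · intro hgen
        exact isGen.ext (binaryBiproductTriangle (P a) A')
          (binaryBiproductTriangle_distinguished _ _)
          (hgen a (Finset.mem_insert_self a T'))
          (h4 (fun j hj => hgen j (Finset.mem_insert_of_mem hj)))

set_option linter.unusedSectionVars false in
/-- Auxiliary: every Hom-space from a shift of an exceptional object admits a finite family
which spans over the endomorphisms and is independent. -/
lemma aux_family (E : C) (hfin : ∀ X Y : C, FiniteDimensional k (X ⟶ Y))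
    (hexc₀ : ∀ f : E ⟶ E, ∃ c : k, f = c • 𝟙 E) (s : ℤ) (X : C) :
    ∃ (n : ℕ) (φ : Fin n → ((E⟦s⟧ : C) ⟶ X)),
      (∀ ψ : (E⟦s⟧ : C) ⟶ X, ∃ d : Fin n → ((E⟦s⟧ : C) ⟶ E⟦s⟧), ψ = ∑ i, d i ≫ φ i) ∧
      (∀ d : Fin n → ((E⟦s⟧ : C) ⟶ E⟦s⟧), ∑ i, d i ≫ φ i = 0 → ∀ i, d i = 0) := by
  classical
  have hfd : FiniteDimensional k ((E⟦s⟧ : C) ⟶ X) := hfin _ _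
  set p : ℕ → Prop := fun n => ∃ φ : Fin n → ((E⟦s⟧ : C) ⟶ X),
    ∀ ψ : (E⟦s⟧ : C) ⟶ X, ∃ d : Fin n → ((E⟦s⟧ : C) ⟶ E⟦s⟧), ψ = ∑ i, d i ≫ φ i with hp
  have hex : ∃ n, p n := by
    obtain ⟨n, v, hv⟩ := Module.Finite.exists_fin (R := k) (M := ((E⟦s⟧ : C) ⟶ X))
    refine ⟨n, v, fun ψ => ?_⟩
    have : ψ ∈ Submodule.span k (Set.range v) := hv ▸ Submodule.mem_top
    obtain ⟨c, hc⟩ := (Submodule.mem_span_range_iff_exists_fun k).1 this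
    refine ⟨fun i => c i • 𝟙 _, ?_⟩
    rw [← hc]
    congr 1
    funext i
    rw [Linear.smul_comp, id_comp]
  obtain ⟨n0, hspec, hmin⟩ : ∃ n0, p n0 ∧ ∀ m < n0, ¬ p m :=
    ⟨Nat.find hex, Nat.find_spec hex, fun m hm => Nat.find_min hex hm⟩
  obtain ⟨φ, hφ⟩ := hspec
  refine ⟨n0, φ, hφ, ?_⟩
  intro d hsum
  by_contra hcon
  push_neg at hcon
  obtain ⟨j, hj⟩ := hcon
  obtain ⟨u, hu⟩ := aux_shift_inv k E hexc₀ (d j) hj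
  cases' n0 with m
  · exact j.elim0
  apply hmin m (by omega)
  rw [hp]
  have hφj : φ j = ∑ i : Fin m, (-(u ≫ d (j.succAbove i))) ≫ φ (j.succAbove i) := by
    have h5 : d j ≫ φ j = -∑ i : Fin m, d (j.succAbove i) ≫ φ (j.succAbove i) := by
      have := Fin.sum_univ_succAbove (fun i => d i ≫ φ i) j
      rw [hsum] at this
      exact eq_neg_of_add_eq_zero_left this.symm
    calc φ j = (u ≫ d j) ≫ φ j := by rw [hu, id_comp]
    _ = u ≫ (d j ≫ φ j) := by rw [assoc]
    _ = u ≫ (-∑ i : Fin m, d (j.succAbove i) ≫ φ (j.succAbove i)) := by rw [h5]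
    _ = ∑ i : Fin m, (-(u ≫ d (j.succAbove i))) ≫ φ (j.succAbove i) := by
        rw [Preadditive.comp_neg, Preadditive.comp_sum]
        rw [← Finset.sum_neg_distrib]
        congr 1; funext i
        rw [Preadditive.neg_comp, assoc]
  refine ⟨fun i => φ (j.succAbove i), fun ψ => ?_⟩
  obtain ⟨d', hd'⟩ := hφ ψ
  refine ⟨fun i => d' (j.succAbove i) + d' j ≫ (-(u ≫ d (j.succAbove i))), ?_⟩
  rw [hd', Fin.sum_univ_succAbove (fun i => d' i ≫ φ i) j, hφj, Preadditive.comp_sum]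
  rw [← Finset.sum_add_distrib]
  congr 1; funext i
  rw [Preadditive.add_comp, assoc]
  abel

/-- for an exceptional object `E` in a `k`-linear triangulated category with
finite-dimensional graded Hom spaces, the triangulated subcategory generated by `E` is
admissible: every `X` admits a distinguished triangle `A → X → B → A⟦1⟧` where `A` is
the (finite) direct sum `⊕ₜ Hom(E, X⟦t⟧) ⊗ E⟦-t⟧` -- characterized by lying in the
subcategory generated by `E` and the map `ev : A ⟶ X` inducing surjections on all
`Hom(E⟦t⟧, -)` -- and the cone `B` lies in the right orthogonal `E^⊥`. -/
theorem stmt2 (E : C)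
    (hfin : ∀ X Y : C, FiniteDimensional k (X ⟶ Y))
    (hgrfin : ∀ X : C, {t : ℤ | ∃ f : E ⟶ X⟦t⟧, f ≠ 0}.Finite)
    (hexc₀ : ∀ f : E ⟶ E, ∃ c : k, f = c • 𝟙 E)
    (hexc₁ : ∀ t : ℤ, t ≠ 0 → ∀ f : E ⟶ E⟦t⟧, f = 0) :
    ∀ X : C, ∃ (A B : C) (ev : A ⟶ X) (g : X ⟶ B) (h : B ⟶ A⟦(1 : ℤ)⟧),
      isGen {E} A ∧
      (∀ t : ℤ, ∀ φ : E⟦t⟧ ⟶ X, ∃ ψ : E⟦t⟧ ⟶ A, ψ ≫ ev = φ) ∧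
      (Triangle.mk ev g h ∈ distTriang C) ∧
      B ∈ rightOrthogonal {E} := by
  intro X
  classical
  have hG := hgrfin X
  set S : Finset ℤ := hG.toFinset.image (fun t => -t) with hS
  have hSu : ∀ t : ℤ, t ∉ S → ∀ φ : (E⟦t⟧ : C) ⟶ X, φ = 0 := by
    intro t ht φ
    by_contra hφ
    obtain ⟨g, hg⟩ := aux_shift_nonzero E X φ hφ
    refine ht ?_
    rw [hS]
    exact Finset.mem_image.2 ⟨-t, hG.mem_toFinset.2 ⟨g, hg⟩, by omega⟩
  choose n φfam hspan hindep using fun s : ℤ => aux_family k E hfin hexc₀ s X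
  let J := (s : {x : ℤ // x ∈ S}) × Fin (n (s : ℤ))
  let P : J → C := fun j => (E⟦(j.1 : ℤ)⟧ : C)
  let fm : ∀ j : J, P j ⟶ X := fun j => φfam (j.1 : ℤ) j.2
  obtain ⟨A, inc, pr, hdiag, horth, htotal, hgen⟩ := aux_biprod {E} P (Finset.univ)
  have hA : isGen {E} A := hgen (fun j _ => isGen.shift _ (isGen.of rfl))
  set ev : A ⟶ X := ∑ j : J, pr j ≫ fm j with hev
  -- surjectivity of composition with ev on morphisms from shifts of E
  have hsurj : ∀ (t : ℤ) (φ : (E⟦t⟧ : C) ⟶ X), ∃ ψ : (E⟦t⟧ : C) ⟶ A, ψ ≫ ev = φ := by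
    intro t φ
    by_cases ht : t ∈ S
    · obtain ⟨d, hd⟩ := hspan t φ
      refine ⟨∑ i : Fin (n t), d i ≫ inc ⟨⟨t, ht⟩, i⟩, ?_⟩
      rw [Preadditive.sum_comp, hd]
      congr 1
      funext i
      rw [hev, Preadditive.comp_sum]
      rw [Finset.sum_eq_single (⟨⟨t, ht⟩, i⟩ : J)]
      · have : inc (⟨⟨t, ht⟩, i⟩ : J) ≫ pr ⟨⟨t, ht⟩, i⟩ ≫ fm ⟨⟨t, ht⟩, i⟩
            = fm ⟨⟨t, ht⟩, i⟩ := by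
          rw [← assoc, hdiag _ (Finset.mem_univ _), id_comp]
        rw [assoc, this]
      · intro b _ hb
        rw [assoc, ← assoc (inc _) (pr b) (fm b),
          horth _ (Finset.mem_univ _) _ (Finset.mem_univ _) (fun hh => hb hh.symm),
          zero_comp, comp_zero]
      · intro hxx
        exact absurd (Finset.mem_univ _) hxx
    · exact ⟨0, by rw [zero_comp, hSu t ht φ]⟩
  -- injectivity of composition with ev
  have hinj : ∀ (t : ℤ) (ψ : (E⟦t⟧ : C) ⟶ A), ψ ≫ ev = 0 → ψ = 0 := by
    intro t ψ h0
    have conclude : (∀ j : J, ψ ≫ pr j = 0) → ψ = 0 := by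
      intro hcomp
      calc ψ = ψ ≫ 𝟙 A := by rw [comp_id]
      _ = ∑ j : J, ψ ≫ (pr j ≫ inc j) := by rw [← htotal, Preadditive.comp_sum]
      _ = 0 := Finset.sum_eq_zero fun j _ => by rw [← assoc, hcomp j, zero_comp]
    have expand : ψ ≫ ev = ∑ j : J, (ψ ≫ pr j) ≫ fm j := by
      rw [hev, Preadditive.comp_sum]
      simp [assoc]
    by_cases ht : t ∈ S
    · have key : ∀ i : Fin (n t), ψ ≫ pr ⟨⟨t, ht⟩, i⟩ = 0 := by
        apply hindep t
        rw [expand] at h0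
        rw [← Finset.univ_sigma_univ, Finset.sum_sigma] at h0
        rw [Finset.sum_eq_single (⟨t, ht⟩ : {x : ℤ // x ∈ S})] at h0
        · exact h0
        · intro b _ hb
          apply Finset.sum_eq_zero
          intro i _
          rw [aux_shift_orth E hexc₁
            (fun hh : t = (b : ℤ) => hb (Subtype.ext hh.symm)) (ψ ≫ pr ⟨b, i⟩), zero_comp]
        · intro hxx
          exact absurd (Finset.mem_univ _) hxx
      apply conclude
      rintro ⟨b, i⟩
      by_cases hbt : (b : ℤ) = t
      · have hb' : b = (⟨t, ht⟩ : {x : ℤ // x ∈ S}) := Subtype.ext hbt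
        subst hb'
        exact key i
      · exact aux_shift_orth E hexc₁ (fun hh => hbt hh.symm) _
    · apply conclude
      rintro ⟨b, i⟩
      have hbt : (b : ℤ) ≠ t := fun hh => ht (hh ▸ b.2)
      exact aux_shift_orth E hexc₁ (fun hh => hbt hh.symm) _
  -- shifted injectivity
  have hinj1 : ∀ (t : ℤ) (ψ : (E⟦t⟧ : C) ⟶ (A⟦(1 : ℤ)⟧ : C)),
      ψ ≫ (shiftFunctor C (1 : ℤ)).map ev = 0 → ψ = 0 := by
    intro t ψ h0
    have hnat : ((shiftFunctorCompIsoId C (1 : ℤ) (-1 : ℤ) (by omega)).hom.app A) ≫ ev =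
        (shiftFunctor C (-1 : ℤ)).map ((shiftFunctor C (1 : ℤ)).map ev) ≫
          ((shiftFunctorCompIsoId C (1 : ℤ) (-1 : ℤ) (by omega)).hom.app X) := by
      simpa using ((shiftFunctorCompIsoId C (1 : ℤ) (-1 : ℤ) (by omega)).hom.naturality ev).symm
    have h1 : (((shiftFunctorAdd' C t (-1 : ℤ) (t - 1) (by omega)).app E).hom ≫
        (shiftFunctor C (-1 : ℤ)).map ψ ≫
        ((shiftFunctorCompIsoId C (1 : ℤ) (-1 : ℤ) (by omega)).hom.app A)) ≫ ev = 0 := by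
      rw [assoc, assoc, hnat, ← assoc ((shiftFunctor C (-1 : ℤ)).map ψ),
        ← Functor.map_comp, h0, Functor.map_zero, zero_comp, comp_zero]
    have h2 := hinj (t - 1) _ h1
    have h3 : (shiftFunctor C (-1 : ℤ)).map ψ =
        ((shiftFunctorAdd' C t (-1 : ℤ) (t - 1) (by omega)).app E).inv ≫
        (((shiftFunctorAdd' C t (-1 : ℤ) (t - 1) (by omega)).app E).hom ≫
          (shiftFunctor C (-1 : ℤ)).map ψ ≫
          ((shiftFunctorCompIsoId C (1 : ℤ) (-1 : ℤ) (by omega)).hom.app A)) ≫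
        ((shiftFunctorCompIsoId C (1 : ℤ) (-1 : ℤ) (by omega)).inv.app A) := by
      simp
    apply (shiftFunctor C (-1 : ℤ)).map_injective
    rw [Functor.map_zero, h3, h2, zero_comp, comp_zero]
  -- the triangle
  obtain ⟨B, g, h, hT⟩ := distinguished_cocone_triangle ev
  refine ⟨A, B, ev, g, h, hA, hsurj, hT, ?_⟩
  intro A0 hA0 t f
  rcases hA0 with rfl
  have hfh : f ≫ h = 0 := by
    apply hinj1 t
    have := comp_distTriang_mor_zero₃₁ _ hT
    change h ≫ (shiftFunctor C (1 : ℤ)).map ev = 0 at this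
    rw [assoc, this, comp_zero]
  obtain ⟨w, hw⟩ := Triangle.coyoneda_exact₃ _ hT f hfh
  change (shiftFunctor C t).obj A0 ⟶ X at w
  obtain ⟨ψ, hψ⟩ := hsurj t w
  have := comp_distTriang_mor_zero₁₂ _ hT
  change ev ≫ g = 0 at this
  change f = w ≫ g at hw
  rw [hw, ← hψ, assoc, this, comp_zero]
end

section
/- Let T be a connected Calabi–Yau triangulated category, i.e., a k-linear triangulated category with Serre functor isomorphic to the shift [n] for some integer n, and with zeroth Hochschild cohomology (endomorphisms of the identity functor in degree 0) equal to k. Then T admits no nontrivial semiorthogonal decomposition: if T = ⟨A, B⟩ then A = 0 or B = 0. -/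
open CategoryTheory Category Limits Pretriangulated

universe v u

variable {C : Type u} [Category.{v} C] [Preadditive C] [HasZeroObject C]
  [HasShift C ℤ] [∀ n : ℤ, (CategoryTheory.shiftFunctor C n).Additive] [Pretriangulated C]

open ZeroObject

private lemma myAbsorb {f : Bool → C} {Z : C} (j : Bool) (g : ⨁ f ⟶ Z)
    (h : ∀ i, i ≠ j → biproduct.ι f i ≫ g = 0) :
    biproduct.π f j ≫ biproduct.ι f j ≫ g = g := by
  conv_rhs => rw [← Category.id_comp g, ← biproduct.total, Preadditive.sum_comp]
  rw [Fintype.sum_bool]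
  cases j
  · rw [Category.assoc, h true (by simp), comp_zero, zero_add, Category.assoc]
  · rw [Category.assoc, Category.assoc, h false (by simp), comp_zero, add_zero]

private lemma myDecompA (X : C) :
    Nonempty (X ≅ ⨁ (fun j : Bool => bif j then X else (0 : C))) := by
  refine ⟨{ hom := biproduct.lift (fun j => match j with | true => 𝟙 X | false => 0)
            inv := biproduct.π _ true
            hom_inv_id := by simp
            inv_hom_id := ?_ }⟩
  apply biproduct.hom_ext
  intro j
  cases j
  · apply (isZero_zero C).eq_of_tgt
  · simp

private lemma myDecompB (X : C) :
    Nonempty (X ≅ ⨁ (fun j : Bool => bif j then (0 : C) else X)) := by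
  refine ⟨{ hom := biproduct.lift (fun j => match j with | true => 0 | false => 𝟙 X)
            inv := biproduct.π _ false
            hom_inv_id := by simp
            inv_hom_id := ?_ }⟩
  apply biproduct.hom_ext
  intro j
  cases j
  · simp
  · apply (isZero_zero C).eq_of_tgt

private lemma myExtStep {A B : Set C} (hA : IsTriangulatedSub A) (hB : IsTriangulatedSub B)
    (Za : ∀ ⦃b : C⦄, b ∈ B → ∀ ⦃a : C⦄, a ∈ A → ∀ f : b ⟶ a, f = 0)
    (Zb : ∀ ⦃a : C⦄, a ∈ A → ∀ ⦃b : C⦄, b ∈ B → ∀ f : a ⟶ b, f = 0)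
    (T : Triangle C) (hT : T ∈ distTriang C)
    {f₁ : Bool → C} (h₁A : f₁ true ∈ A) (h₁B : f₁ false ∈ B) (e₁ : T.obj₁ ≅ ⨁ f₁)
    {f₃ : Bool → C} (h₃A : f₃ true ∈ A) (h₃B : f₃ false ∈ B) (e₃ : T.obj₃ ≅ ⨁ f₃) :
    ∃ f : Bool → C, f true ∈ A ∧ f false ∈ B ∧ Nonempty (T.obj₂ ≅ ⨁ f) := by
  classical
  let F := shiftFunctor C (1 : ℤ)
  let m : ⨁ f₃ ⟶ F.obj (⨁ f₁) := e₃.inv ≫ T.mor₃ ≫ F.map e₁.hom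
  let wc : ∀ i j : Bool, f₃ i ⟶ F.obj (f₁ j) := fun i j =>
    biproduct.ι f₃ i ≫ m ≫ F.map (biproduct.π f₁ j)
  have hcross : ∀ i j : Bool, i ≠ j → wc i j = 0 := by
    rintro (_|_) (_|_) hij
    · exact absurd rfl hij
    · exact Za h₃B (hA.shift (f₁ true) h₁A 1) _
    · exact Zb h₃A (hB.shift (f₁ false) h₁B 1) _
    · exact absurd rfl hij
  choose Cc u v hc using fun j : Bool => distinguished_cocone_triangle (wc j j)
  let T'' : Bool → Triangle C := fun j => (Triangle.mk (wc j j) (u j) (v j)).invRotate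
  have hT'' : ∀ j, T'' j ∈ distTriang C := fun j => inv_rot_of_distTriang _ (hc j)
  have hPT : productTriangle T'' ∈ distTriang C := productTriangle_distinguished T'' hT''
  have hR : T.rotate.rotate ∈ distTriang C := rot_of_distTriang _ (rot_of_distTriang _ hT)
  have hPTr : (productTriangle T'').rotate ∈ distTriang C := rot_of_distTriang _ hPT
  let E₁ : T.obj₃ ≅ ∏ᶜ fun j => (T'' j).obj₂ := e₃ ≪≫ biproduct.isoProduct f₃
  let E₂ : (T.obj₁)⟦(1 : ℤ)⟧ ≅ ∏ᶜ fun j => (T'' j).obj₃ :=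
    F.mapIso e₁ ≪≫ F.mapBiproduct f₁ ≪≫ biproduct.isoProduct _
  have hE₂π : ∀ (j : Bool),
      E₂.hom ≫ Pi.π (fun j => (T'' j).obj₃) j = F.map e₁.hom ≫ F.map (biproduct.π f₁ j) := by
    intro j
    show E₂.hom ≫ Pi.π (F.obj ∘ f₁) j = F.map e₁.hom ≫ F.map (biproduct.π f₁ j)
    simp only [E₂, Iso.trans_hom, Functor.mapIso_hom, Category.assoc,
      biproduct.isoProduct_hom, Pi.lift_π, Functor.mapBiproduct_hom]
    show (F.map e₁.hom ≫ (F.mapBiproduct f₁).hom ≫ (biproduct.isoProduct (F.obj ∘ f₁)).hom) ≫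
      Pi.π (F.obj ∘ f₁) j = _
    rw [Category.assoc, Category.assoc, biproduct.isoProduct_hom, Pi.lift_π,
      Functor.mapBiproduct_hom]
    exact congrArg (F.map e₁.hom ≫ ·) (biproduct.lift_π _ _)
  have hE₁π : ∀ (j : Bool),
      E₁.hom ≫ Pi.π (fun j => (T'' j).obj₂) j = e₃.hom ≫ biproduct.π f₃ j := by
    intro j
    show E₁.hom ≫ Pi.π f₃ j = e₃.hom ≫ biproduct.π f₃ j
    simp only [E₁, Iso.trans_hom, Category.assoc, biproduct.isoProduct_hom, Pi.lift_π]
    show (e₃.hom ≫ (biproduct.isoProduct f₃).hom) ≫ Pi.π f₃ j = _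
    rw [Category.assoc, biproduct.isoProduct_hom, Pi.lift_π]
  have hE₁πg : ∀ (j : Bool) {Z : C} (g : (T'' j).obj₂ ⟶ Z),
      E₁.hom ≫ Pi.π (fun j => (T'' j).obj₂) j ≫ g = e₃.hom ≫ biproduct.π f₃ j ≫ g := by
    intro j Z g
    rw [← Category.assoc, hE₁π j]
    exact Category.assoc _ _ _
  have comm : T.rotate.rotate.mor₁ ≫ E₂.hom = E₁.hom ≫ (productTriangle T'').rotate.mor₁ := by
    apply Pi.hom_ext
    intro j
    have habs : biproduct.π f₃ j ≫ biproduct.ι f₃ j ≫ m ≫ F.map (biproduct.π f₁ j)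
        = m ≫ F.map (biproduct.π f₁ j) := by
      apply myAbsorb
      intro i hij
      exact hcross i j hij
    simp only [Triangle.rotate_mor₁, Triangle.rotate_mor₂, productTriangle_mor₂,
      Category.assoc, limMap_π, Discrete.natTrans_app]
    show (T.mor₃ ≫ E₂.hom) ≫ Pi.π (fun j => (T'' j).obj₃) j =
      (E₁.hom ≫ Limits.Pi.map fun j => (T'' j).mor₂) ≫ Pi.π (fun j => (T'' j).obj₃) j
    rw [Category.assoc, Category.assoc, Pi.map_π, hE₂π j, hE₁πg j]
    show T.mor₃ ≫ F.map e₁.hom ≫ F.map (biproduct.π f₁ j)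
        = e₃.hom ≫ biproduct.π f₃ j ≫ biproduct.ι f₃ j ≫ m ≫ F.map (biproduct.π f₁ j)
    rw [habs]
    simp only [m, Category.assoc, Iso.hom_inv_id_assoc]
  let ψ := isoTriangleOfIso₁₂ _ _ hR hPTr E₁ E₂ comm
  let ψ₃ : F.obj T.obj₂ ≅ F.obj (∏ᶜ fun j => (T'' j).obj₁) := Triangle.π₃.mapIso ψ
  refine ⟨fun j => (T'' j).obj₁, ?_, ?_, ⟨F.preimageIso ψ₃ ≪≫ (biproduct.isoProduct _).symm⟩⟩
  · exact hA.ext ((T'' true).invRotate) (inv_rot_of_distTriang _ (hT'' true))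
      (hA.shift ((f₁ true)⟦(1:ℤ)⟧) (hA.shift (f₁ true) h₁A 1) (-1)) h₃A
  · exact hB.ext ((T'' false).invRotate) (inv_rot_of_distTriang _ (hT'' false))
      (hB.shift ((f₁ false)⟦(1:ℤ)⟧) (hB.shift (f₁ false) h₁B 1) (-1)) h₃B

/-- Serre functor data on a `k`-linear category: an autoequivalence `S` with
(bifunctorial) isomorphisms `Hom(X,Y) ≅ Hom(Y, S X)^∨`. -/
structure SerreData (k : Type*) [Field k] (D : Type*) [Category D] [Preadditive D]
    [CategoryTheory.Linear k D] : Type _ where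
  S : D ⥤ D
  isEquiv : S.IsEquivalence
  duality : ∀ X Y : D, (X ⟶ Y) ≃ₗ[k] Module.Dual k (Y ⟶ S.obj X)

variable (k : Type*) [Field k] [Linear k C]

/-- a connected Calabi–Yau triangulated category (Serre functor isomorphic
to the shift `[n]`, and zeroth Hochschild cohomology -- endomorphisms of the identity
functor -- equal to `k`) admits no nontrivial semiorthogonal decomposition: if
`T = ⟨A, B⟩` then `A = 0` or `B = 0`. -/
theorem stmt7 (SD : SerreData k C) (n : ℤ)
    (hCY : Nonempty (SD.S ≅ CategoryTheory.shiftFunctor C n))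
    (hHH0 : ∀ η : 𝟭 C ⟶ 𝟭 C, ∃ c : k, η = c • 𝟙 (𝟭 C))
    (hHH0' : (𝟙 (𝟭 C) : 𝟭 C ⟶ 𝟭 C) ≠ 0)
    (A B : Set C) (hA : IsTriangulatedSub A) (hB : IsTriangulatedSub B)
    (hsemi : ∀ b ∈ B, ∀ a ∈ A, ∀ t : ℤ, ∀ f : b ⟶ a⟦t⟧, f = 0)
    (hgen : ∀ X : C, isGen (A ∪ B) X) :
    (∀ X ∈ A, Limits.IsZero X) ∨ (∀ X ∈ B, Limits.IsZero X) := by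
  classical
  have Za : ∀ ⦃b : C⦄, b ∈ B → ∀ ⦃a : C⦄, a ∈ A → ∀ f : b ⟶ a, f = 0 := by
    intro b hb a ha f
    have h := hsemi b hb a ha 0 (f ≫ (shiftFunctorZero C ℤ).inv.app a)
    calc f = (f ≫ (shiftFunctorZero C ℤ).inv.app a) ≫ (shiftFunctorZero C ℤ).hom.app a := by
          rw [Category.assoc, Iso.inv_hom_id_app]; simp
      _ = 0 := by rw [h, Limits.zero_comp]
  have Zb : ∀ ⦃a : C⦄, a ∈ A → ∀ ⦃b : C⦄, b ∈ B → ∀ f : a ⟶ b, f = 0 := by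
    intro a ha b hb f
    obtain ⟨e⟩ := hCY
    have hz : ∀ g : b ⟶ SD.S.obj a, g = 0 := by
      intro g
      have h := hsemi b hb a ha n (g ≫ e.hom.app a)
      calc g = (g ≫ e.hom.app a) ≫ e.inv.app a := by
            rw [Category.assoc, Iso.hom_inv_id_app]; simp
        _ = 0 := by rw [h, Limits.zero_comp]
    apply (SD.duality a b).injective
    apply LinearMap.ext
    intro g
    rw [hz g]
    simp
  have hdec : ∀ X : C, ∃ f : Bool → C, f true ∈ A ∧ f false ∈ B ∧ Nonempty (X ≅ ⨁ f) := by
    intro X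
    induction hgen X with
    | @of X hX =>
      rcases hX with hX | hX
      · exact ⟨fun j : Bool => bif j then X else (0 : C), hX,
          hB.zero 0 (isZero_zero C), myDecompA X⟩
      · exact ⟨fun j : Bool => bif j then (0 : C) else X,
          hA.zero 0 (isZero_zero C), hX, myDecompB X⟩
    | @zero X hX =>
      exact ⟨fun j : Bool => bif j then X else (0 : C), hA.zero X hX,
        hB.zero 0 (isZero_zero C), myDecompA X⟩
    | @iso X Y e hX ih =>
      obtain ⟨f, hfA, hfB, ⟨d⟩⟩ := ih
      exact ⟨f, hfA, hfB, ⟨e.symm ≪≫ d⟩⟩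
    | @shift X m hX ih =>
      obtain ⟨f, hfA, hfB, ⟨d⟩⟩ := ih
      exact ⟨fun j => (f j)⟦m⟧, hA.shift _ hfA m, hB.shift _ hfB m,
        ⟨(shiftFunctor C m).mapIso d ≪≫ (shiftFunctor C m).mapBiproduct f⟩⟩
    | ext T hT h₁ h₃ ih₁ ih₃ =>
      obtain ⟨f₁, h₁A, h₁B, ⟨d₁⟩⟩ := ih₁
      obtain ⟨f₃, h₃A, h₃B, ⟨d₃⟩⟩ := ih₃
      exact myExtStep hA hB Za Zb T hT h₁A h₁B d₁ h₃A h₃B d₃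
  have hdec' : ∀ X : C, ∃ (a b : C) (ia : a ⟶ X) (pa : X ⟶ a) (ib : b ⟶ X) (pb : X ⟶ b),
      a ∈ A ∧ b ∈ B ∧ pa ≫ ia + pb ≫ ib = 𝟙 X := by
    intro X
    obtain ⟨f, hfA, hfB, ⟨d⟩⟩ := hdec X
    refine ⟨f true, f false, biproduct.ι f true ≫ d.inv, d.hom ≫ biproduct.π f true,
      biproduct.ι f false ≫ d.inv, d.hom ≫ biproduct.π f false, hfA, hfB, ?_⟩
    have htot : biproduct.π f true ≫ biproduct.ι f true
        + biproduct.π f false ≫ biproduct.ι f false = 𝟙 (⨁ f) := by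
      rw [← biproduct.total, Fintype.sum_bool]
    calc (d.hom ≫ biproduct.π f true) ≫ biproduct.ι f true ≫ d.inv
          + (d.hom ≫ biproduct.π f false) ≫ biproduct.ι f false ≫ d.inv
        = d.hom ≫ (biproduct.π f true ≫ biproduct.ι f true
            + biproduct.π f false ≫ biproduct.ι f false) ≫ d.inv := by
          simp only [Preadditive.comp_add, Preadditive.add_comp, Category.assoc]
      _ = 𝟙 X := by rw [htot]; simp
  choose a b ia pa ib pb haA hbB hsum using hdec'
  have key : ∀ {X Y : C} (g : X ⟶ Y), g ≫ pa Y ≫ ia Y = (pa X ≫ ia X) ≫ g := by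
    intro X Y g
    have h1 : ia X ≫ g ≫ pb Y = 0 := Zb (haA X) (hbB Y) _
    have h2 : ib X ≫ g ≫ pa Y = 0 := Za (hbB X) (haA Y) _
    calc g ≫ pa Y ≫ ia Y
        = (pa X ≫ ia X + pb X ≫ ib X) ≫ g ≫ pa Y ≫ ia Y := by
          rw [hsum X, Category.id_comp]
      _ = pa X ≫ ia X ≫ g ≫ pa Y ≫ ia Y := by
          simp only [Preadditive.add_comp, Category.assoc, reassoc_of% h2,
            Limits.zero_comp, Limits.comp_zero, add_zero]
      _ = pa X ≫ ia X ≫ g ≫ (pa Y ≫ ia Y + pb Y ≫ ib Y) := by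
          simp only [Preadditive.comp_add, Category.assoc, reassoc_of% h1,
            Limits.zero_comp, Limits.comp_zero, add_zero]
      _ = (pa X ≫ ia X) ≫ g := by rw [hsum Y]; simp
  let η : 𝟭 C ⟶ 𝟭 C :=
    { app := fun X => pa X ≫ ia X
      naturality := fun X Y g => key g }
  obtain ⟨c, hc⟩ := hHH0 η
  have happ : ∀ X : C, pa X ≫ ia X = c • 𝟙 X := by
    intro X
    have h := congrArg (fun (τ : 𝟭 C ⟶ 𝟭 C) => τ.app X) hc
    simpa [η] using h
  by_contra hcon
  push_neg at hcon
  obtain ⟨⟨a₀, ha₀, hna⟩, b₀, hb₀, hnb⟩ := hcon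
  have h1 : 𝟙 a₀ = c • 𝟙 a₀ := by
    have h0 : pb a₀ = 0 := Zb ha₀ (hbB a₀) _
    have hs := hsum a₀
    rw [h0, Limits.zero_comp, add_zero] at hs
    calc 𝟙 a₀ = pa a₀ ≫ ia a₀ := hs.symm
      _ = c • 𝟙 a₀ := happ a₀
  have h2 : (0 : b₀ ⟶ b₀) = c • 𝟙 b₀ := by
    have h0 : pa b₀ = 0 := Za hb₀ (haA b₀) _
    calc (0 : b₀ ⟶ b₀) = pa b₀ ≫ ia b₀ := by rw [h0, Limits.zero_comp]
      _ = c • 𝟙 b₀ := happ b₀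
  have hc0 : c = 0 := by
    by_contra hc0
    apply hnb
    rw [Limits.IsZero.iff_id_eq_zero]
    have h3 : c⁻¹ • (c • 𝟙 b₀) = c⁻¹ • (0 : b₀ ⟶ b₀) := by rw [← h2]
    rwa [smul_smul, inv_mul_cancel₀ hc0, one_smul, smul_zero] at h3
  refine absurd ?_ hna
  rw [Limits.IsZero.iff_id_eq_zero]
  rw [hc0, zero_smul] at h1
  exact h1
end

section
/- If composable resolutions are given, i.e., a resolution π : Ỹ → Y factors as Ỹ →^f Ỹ' →^{π'} Y with f proper birational between smooth varieties, then Rπ_* ∘ Lf* ≅ Rπ'_*; consequently the categorical resolution (D^b(coh Ỹ), Rπ_*, Lπ*) dominates (D^b(coh Ỹ'), Rπ'_*, Lπ'*) via the fully faithful functor Lf*. -/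
open CategoryTheory

universe v u

/-- compatibility of categorical resolutions with composition of geometric
resolutions.  `D`, `D'`, `E` model `D^b(coh Ỹ)`, `D^b(coh Ỹ')` and `D^b(coh Y)` for a
resolution `π : Ỹ → Y` factoring as `Ỹ →^f Ỹ' →^{π'} Y` with `f` proper birational
between smooth varieties.  `fpull = Lf*`, `fstar = Rf_*` (an adjoint pair), with
`Rf_* O_Ỹ = O_{Ỹ'}` giving `Rf_* ∘ Lf* ≅ id`; `πst = Rπ_*`, `π'st = Rπ'_*`, and
`Rπ_* = Rπ'_* ∘ Rf_*` since `π = π' ∘ f`.  Conclusion: `Rπ_* ∘ Lf* ≅ Rπ'_*`, and `Lf*`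
is fully faithful, so the categorical resolution `(D^b(coh Ỹ), Rπ_*, Lπ*)` dominates
`(D^b(coh Ỹ'), Rπ'_*, Lπ'*)` via `ε = Lf*`. -/
theorem stmt19
    (D D' E : Type u) [Category.{v} D] [Category.{v} D'] [Category.{v} E]
    (fpull : D' ⥤ D) (fstar : D ⥤ D') (adj : fpull ⊣ fstar)
    (hO : Nonempty (fpull ⋙ fstar ≅ 𝟭 D'))
    (πst : D ⥤ E) (π'st : D' ⥤ E)
    (hfac : Nonempty (πst ≅ fstar ⋙ π'st)) :
    Nonempty (fpull ⋙ πst ≅ π'st) ∧ fpull.Full ∧ fpull.Faithful := by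
  obtain ⟨i⟩ := hO
  obtain ⟨j⟩ := hfac
  have ff := adj.fullyFaithfulLOfCompIsoId i
  refine ⟨⟨Functor.isoWhiskerLeft fpull j ≪≫ (Functor.associator _ _ _).symm ≪≫
    Functor.isoWhiskerRight i π'st ≪≫ π'st.leftUnitor⟩, ff.full, ff.faithful⟩
end
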